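/- Fenchel duality in sandwich (attainment) form: Let n be a natural number, let D ⊆ ℝⁿ be a nonempty convex set, let f : ℝⁿ → ℝ be convex on D, let g : ℝⁿ → ℝ be continuous and concave on all of ℝⁿ, and let α ∈ ℝ satisfy g(x) + α ≤ f(x) for all x ∈ D. Then there exist u ∈ ℝⁿ and c ∈ ℝ such that g(x) + α ≤ ⟪x, u⟫ − c for all x ∈ ℝⁿ and ⟪x, u⟫ − c ≤ f(x) for all x ∈ D. (Taking α to be the infimum of f − g over D, this yields the duality inf_{x}(f(x) − g(x)) = max_{x*}(g*(x*) − f*(x*)), with the maximum attained at u.) -/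

import Mathlib

open scoped RealInnerProductSpace

/-- Fenchel duality in sandwich form: if `f` is convex on a nonempty convex set `D ⊆ ℝⁿ`,
`g : ℝⁿ → ℝ` is continuous and concave, and `g x + α ≤ f x` on `D`, then there is an
affine function `x ↦ ⟪x, u⟫ - c` sandwiched between `g + α` (on all of `ℝⁿ`) and `f`
(on `D`). -/
theorem fenchel_duality_sandwich (n : ℕ)
    (D : Set (EuclideanSpace ℝ (Fin n))) (hD : D.Nonempty)
    (f : EuclideanSpace ℝ (Fin n) → ℝ) (hf : ConvexOn ℝ D f)
    (g : EuclideanSpace ℝ (Fin n) → ℝ) (hgcont : Continuous g)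
    (hgconc : ConcaveOn ℝ Set.univ g)
    (α : ℝ) (hα : ∀ x ∈ D, g x + α ≤ f x) :
    ∃ (u : EuclideanSpace ℝ (Fin n)) (c : ℝ),
      (∀ x : EuclideanSpace ℝ (Fin n), g x + α ≤ ⟪x, u⟫ - c) ∧
      (∀ x ∈ D, ⟪x, u⟫ - c ≤ f x) := by
  classical
  let E := EuclideanSpace ℝ (Fin n)
  let A : Set (E × ℝ) := {p | p.1 ∈ D ∧ f p.1 ≤ p.2}
  let B : Set (E × ℝ) := {p | p.2 < g p.1 + α}
  have hAconv : Convex ℝ A := hf.convex_epigraph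
  have hgconc' : ConcaveOn ℝ (Set.univ : Set E) (fun x => g x + α) := by
    have := hgconc.add (concaveOn_const α convex_univ)
    exact this
  have hBconv : Convex ℝ B := by
    have h := hgconc'.convex_strict_hypograph
    have heq : B = {p : E × ℝ | p.1 ∈ Set.univ ∧ p.2 < g p.1 + α} := by
      ext p; simp [B]
    rw [heq]; exact h
  have hBopen : IsOpen B := by
    have : Continuous fun p : E × ℝ => g p.1 + α :=
      (hgcont.comp continuous_fst).add continuous_const
    exact isOpen_lt continuous_snd this
  have hdisj : Disjoint B A := by
    rw [Set.disjoint_left]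
    rintro ⟨x, t⟩ hpB ⟨hxD, hft⟩
    exact absurd (hα x hxD) (not_le.mpr (lt_of_le_of_lt hft hpB))
  obtain ⟨φ, u, hBlt, hAge⟩ := geometric_hahn_banach_open hBconv hBopen hAconv hdisj
  set β : ℝ := φ (0, 1) with hβdef
  have key : ∀ (x : E) (t : ℝ), φ (x, t) = φ (x, 0) + t * β := by
    intro x t
    have h1 : (x, t) = (x, (0:ℝ)) + t • ((0:E), (1:ℝ)) := by
      simp [Prod.ext_iff]
    rw [h1, map_add, map_smul, smul_eq_mul]
  -- membership helpers
  have hmemB : ∀ (x : E) (t : ℝ), t < g x + α → (x, t) ∈ B := fun x t ht => ht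
  have hβnonneg : 0 ≤ β := by
    by_contra h
    push_neg at h
    set t : ℝ := min (g 0 + α - 1) (u / β) with htdef
    have htB : ((0:E), t) ∈ B := hmemB 0 t (by
      have := min_le_left (g 0 + α - 1) (u / β); dsimp [t]; linarith [min_le_left (g 0 + α - 1) (u / β)])
    have hlt := hBlt _ htB
    rw [key] at hlt
    have h0 : φ ((0:E), (0:ℝ)) = 0 := by
      have : ((0:E), (0:ℝ)) = (0 : E × ℝ) := rfl
      rw [this, map_zero]
    rw [h0, zero_add] at hlt
    have ht2 : t ≤ u / β := min_le_right _ _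
    have huβ : (u / β) * β = u := div_mul_cancel₀ u h.ne
    have := mul_le_mul_of_nonpos_right ht2 h.le
    linarith
  have hβpos : 0 < β := by
    rcases lt_or_eq_of_le hβnonneg with h | h
    · exact h
    · exfalso
      -- β = 0 : then φ(x,0) < u for all x, so φ(x,0) = 0, contradiction
      have hlin : ∀ x : E, φ (x, 0) < u := by
        intro x
        have hxB : (x, g x + α - 1) ∈ B := hmemB _ _ (by linarith)
        have := hBlt _ hxB
        rw [key, ← h, mul_zero, add_zero] at this
        exact this
      have hzero : ∀ x : E, φ (x, 0) = 0 := by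
        intro x
        by_contra hx
        rcases lt_or_gt_of_ne hx with hneg | hpos
        · have := hlin (((u - φ (x,0))/ φ (x,0) + 1) • x)
          have hsm : φ ((((u - φ (x,0))/ φ (x,0) + 1) • x), 0) =
              ((u - φ (x,0))/ φ (x,0) + 1) * φ (x, 0) := by
            have : ((((u - φ (x,0))/ φ (x,0) + 1) • x), (0:ℝ)) =
                ((u - φ (x,0))/ φ (x,0) + 1) • (x, (0:ℝ)) := by
              simp [Prod.ext_iff]
            rw [this, map_smul, smul_eq_mul]
          rw [hsm] at this
          have hc : ((u - φ (x,0))/ φ (x,0) + 1) * φ (x, 0) = u := by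
            field_simp
            ring
          linarith
        · have := hlin ((u / φ (x,0)) • x)
          have hsm : φ (((u / φ (x,0)) • x), 0) = (u / φ (x,0)) * φ (x, 0) := by
            have : (((u / φ (x,0)) • x), (0:ℝ)) = (u / φ (x,0)) • (x, (0:ℝ)) := by
              simp [Prod.ext_iff]
            rw [this, map_smul, smul_eq_mul]
          rw [hsm] at this
          have hc : (u / φ (x,0)) * φ (x, 0) = u := by field_simp
          linarith
      obtain ⟨x₀, hx₀⟩ := hD
      have hApt : (x₀, f x₀) ∈ A := ⟨hx₀, le_refl _⟩
      have h1 := hAge _ hApt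
      rw [key, hzero, ← h, mul_zero, add_zero] at h1
      have hBpt : (x₀, g x₀ + α - 1) ∈ B := hmemB _ _ (by linarith)
      have h2 := hBlt _ hBpt
      rw [key, hzero, ← h, mul_zero, add_zero] at h2
      linarith
  -- build the linear functional L x = -(φ (x,0))/β as a continuous linear map
  set L : E →L[ℝ] ℝ := (-β⁻¹) • (φ.comp (ContinuousLinearMap.inl ℝ E ℝ)) with hLdef
  have hL : ∀ x : E, L x = -(φ (x, 0)) / β := by
    intro x
    simp [hLdef, ContinuousLinearMap.smul_apply, ContinuousLinearMap.comp_apply]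
    ring
  set w : E := (InnerProductSpace.toDual ℝ E).symm L with hwdef
  have hw : ∀ x : E, ⟪x, w⟫ = L x := by
    intro x
    rw [real_inner_comm]
    exact InnerProductSpace.toDual_symm_apply
  refine ⟨w, -u / β, ?_, ?_⟩
  · intro x
    rw [hw, hL]
    -- need : g x + α ≤ -(φ(x,0))/β + u/β, i.e. φ(x,0) + β(g x + α) ≤ u
    have hforall : ∀ t : ℝ, t < g x + α → φ (x, 0) + t * β < u := by
      intro t ht
      have := hBlt _ (hmemB x t ht)
      rwa [key] at this
    have hle : φ (x, 0) + (g x + α) * β ≤ u := by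
      by_contra hcon
      push_neg at hcon
      set ε : ℝ := (φ (x, 0) + (g x + α) * β - u) / β with hε
      have hεpos : 0 < ε := div_pos (by linarith) hβpos
      have h2 := hforall (g x + α - ε / 2) (by linarith)
      have hεβ : ε * β = φ (x, 0) + (g x + α) * β - u := by
        rw [hε, div_mul_cancel₀ _ hβpos.ne']
      nlinarith [h2, hεβ, hcon]
    have heq : -φ (x, 0) / β - -u / β = (u - φ (x, 0)) / β := by ring
    rw [heq, le_div_iff₀ hβpos]
    linarith
  · intro x hxD
    rw [hw, hL]
    have hxA : ((x : E), f x) ∈ A := ⟨hxD, le_rfl⟩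
    have hge := hAge _ hxA
    rw [key] at hge
    have heq : -φ (x, 0) / β - -u / β = (u - φ (x, 0)) / β := by ring
    rw [heq, div_le_iff₀ hβpos]
    linarith
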